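/- The number of compositions (m_1,...,m_t) of m into positive parts, weighted by (-1)^t times the product C(n-m_1, m_1-1)·∏_{i=2}^t C(n-m_i, m_i), depends only on m (not on n) whenever n ≥ m; in particular for m = n it equals (-1)^n C_{n-1}. -/

import Mathlib

open Finset Polynomial

/-! ### The sequence `(-1)^j * catalan (j-1)` and Segner's recurrence -/

/-- `dseq j = (-1)^j * catalan (j-1)` for `j ≥ 1`, `0` at `j = 0`. -/
def dseq : ℕ → ℤ := fun j => if j = 0 then 0 else (-1) ^ j * catalan (j - 1)

lemma dseq_zero : dseq 0 = 0 := by simp [dseq]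

lemma dseq_segner {j : ℕ} (hj : 2 ≤ j) :
    ∑ p ∈ Finset.HasAntidiagonal.antidiagonal j, dseq p.1 * dseq p.2 = dseq j := by
  obtain ⟨i, rfl⟩ : ∃ i, j = i + 2 := ⟨j - 2, by omega⟩
  rw [Finset.Nat.sum_antidiagonal_eq_sum_range_succ_mk, Finset.sum_range_succ',
    Finset.sum_range_succ, show i + 2 - (i + 1 + 1) = 0 from by omega, dseq_zero,
    mul_zero, zero_mul, add_zero, add_zero]
  have h1 : ∀ k ∈ Finset.range (i+1), dseq (k+1) * dseq (i+2-(k+1))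
      = (-1)^(i+2) * ((catalan k * catalan (i - k) : ℕ) : ℤ) := by
    intro k hk
    simp only [Finset.mem_range] at hk
    have h2 : i + 2 - (k+1) = (i - k) + 1 := by omega
    have hp : ((-1:ℤ))^(k+1) * (-1)^((i-k)+1) = (-1)^(i+2) := by
      rw [← pow_add]; congr 1; omega
    rw [h2]
    simp only [dseq, if_neg (Nat.succ_ne_zero _), Nat.add_sub_cancel]
    push_cast
    linear_combination ((catalan k : ℤ) * catalan (i-k)) * hp
  rw [Finset.sum_congr rfl h1, ← Finset.mul_sum]
  have hcat : ((catalan (i + 1) : ℕ) : ℤ)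
      = ∑ k ∈ Finset.range (i+1), ((catalan k * catalan (i-k) : ℕ) : ℤ) := by
    rw [catalan_succ]
    push_cast
    rw [← Fin.sum_univ_eq_sum_range (fun k => ((catalan k : ℤ) * catalan (i-k)))]
  rw [← hcat]
  simp [dseq]

/-! ### Polynomials from sequences -/

noncomputable def polyOf (f : ℕ → ℤ) (N : ℕ) : ℤ[X] :=
  ∑ j ∈ Finset.range (N+1), C (f j) * X^j

lemma coeff_polyOf (f : ℕ → ℤ) (N k : ℕ) :
    (polyOf f N).coeff k = if k ≤ N then f k else 0 := by
  simp only [polyOf, finset_sum_coeff, coeff_C_mul, coeff_X_pow, mul_ite, mul_one, mul_zero]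
  rw [Finset.sum_ite_eq (Finset.range (N+1)) k f]
  simp [Nat.lt_succ_iff]

lemma key_dvd (m : ℕ) :
    (X : ℤ[X])^(m+1) ∣ (polyOf dseq m)^2 - polyOf dseq m - X := by
  rw [Polynomial.X_pow_dvd_iff]
  intro k hk
  have hk' : k ≤ m := by omega
  simp only [coeff_sub, coeff_X]
  rw [sq, coeff_mul]
  have h1 : ∀ p ∈ Finset.HasAntidiagonal.antidiagonal k,
      (polyOf dseq m).coeff p.1 * (polyOf dseq m).coeff p.2 = dseq p.1 * dseq p.2 := by
    intro p hp
    rw [Finset.HasAntidiagonal.mem_antidiagonal] at hp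
    rw [coeff_polyOf, coeff_polyOf, if_pos (by omega), if_pos (by omega)]
  rw [Finset.sum_congr rfl h1, coeff_polyOf, if_pos hk']
  rcases Nat.lt_or_ge k 2 with h2 | h2
  · interval_cases k
    · simp [dseq_zero]
    · rw [Finset.Nat.sum_antidiagonal_eq_sum_range_succ_mk]
      norm_num [dseq, Finset.sum_range_succ]
  · rw [dseq_segner h2, if_neg (by omega)]
    ring

lemma coeff_X_mul_one_add_X_pow (j k : ℕ) :
    ((X * (1 + X) : ℤ[X])^j).coeff k = if j ≤ k then (j.choose (k - j) : ℤ) else 0 := by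
  rw [mul_pow, mul_comm, coeff_mul_X_pow', coeff_one_add_X_pow]

/-! ### The base-case sequence `Bseq` -/

def Bseq (m : ℕ) : ℤ := ∑ j ∈ Finset.range (m+1), dseq j * (j.choose (m - j) : ℤ)

lemma coeff_comp_eq_Bseq {m k : ℕ} (hk : k ≤ m) :
    ((polyOf dseq m).comp (X * (1 + X))).coeff k = Bseq k := by
  rw [polyOf, Polynomial.sum_comp, finset_sum_coeff]
  have h1 : ∀ j ∈ Finset.range (m+1), ((C (dseq j) * X^j).comp (X*(1+X))).coeff k
      = dseq j * (if j ≤ k then (j.choose (k - j) : ℤ) else 0) := by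
    intro j hj
    rw [mul_comp, C_comp, pow_comp, X_comp, coeff_C_mul, coeff_X_mul_one_add_X_pow]
  rw [Finset.sum_congr rfl h1, Bseq]
  rw [← Finset.sum_subset (Finset.range_subset_range.2 (by omega : k + 1 ≤ m + 1))]
  · refine Finset.sum_congr rfl fun j hj => ?_
    rw [Finset.mem_range] at hj
    rw [if_pos (by omega)]
  · intro j _ hj
    rw [Finset.mem_range] at hj
    rw [if_neg (by omega), mul_zero]

lemma Bseq_funEq (k : ℕ) :
    Bseq k = ∑ p ∈ Finset.HasAntidiagonal.antidiagonal k, Bseq p.1 * Bseq p.2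
      - ((if k = 1 then 1 else 0) + (if k = 2 then 1 else 0) : ℤ) := by
  set Q := polyOf dseq k with hQ
  set G := Q.comp (X * (1 + X)) with hG
  obtain ⟨R, hR⟩ := key_dvd k
  have hcomp : G^2 - G - (X*(1+X)) = (Q^2 - Q - X).comp (X*(1+X)) := by
    simp [sub_comp, pow_comp, X_comp, hG]
  have hdvd : (X:ℤ[X])^(k+1) ∣ G^2 - G - (X*(1+X)) := by
    rw [hcomp, hR, mul_comp, pow_comp, X_comp]
    exact Dvd.dvd.mul_right (pow_dvd_pow_of_dvd (dvd_mul_right X (1+X)) _) _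
  have h0 : (G^2 - G - (X*(1+X))).coeff k = 0 :=
    Polynomial.X_pow_dvd_iff.1 hdvd k (Nat.lt_succ_self k)
  rw [coeff_sub, coeff_sub] at h0
  have hGk : G.coeff k = Bseq k := coeff_comp_eq_Bseq le_rfl
  have hG2 : (G^2).coeff k = ∑ p ∈ Finset.HasAntidiagonal.antidiagonal k, Bseq p.1 * Bseq p.2 := by
    rw [sq, coeff_mul]
    refine Finset.sum_congr rfl fun p hp => ?_
    rw [Finset.HasAntidiagonal.mem_antidiagonal] at hp
    rw [coeff_comp_eq_Bseq (by omega : p.1 ≤ k), coeff_comp_eq_Bseq (by omega : p.2 ≤ k)]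
  have hP : ((X*(1+X) : ℤ[X])).coeff k
      = ((if k = 1 then 1 else 0) + (if k = 2 then 1 else 0) : ℤ) := by
    have : (X*(1+X) : ℤ[X]) = X + X^2 := by ring
    rw [this, coeff_add, coeff_X, coeff_X_pow]
    congr 1
    · simp [eq_comm]
  rw [hGk, hG2, hP] at h0
  linarith

lemma Bseq_eq (m : ℕ) : Bseq m = if m = 1 then -1 else 0 := by
  induction m using Nat.strong_induction_on with
  | _ m ih =>
    rcases Nat.lt_or_ge m 3 with hm | hm
    · interval_cases m
      · simp [Bseq, dseq_zero]
      · norm_num [Bseq, dseq, Finset.sum_range_succ]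
      · norm_num [Bseq, dseq, Finset.sum_range_succ, catalan_one]
    · rw [Bseq_funEq m, if_neg (by omega), if_neg (by omega), if_neg (by omega)]
      have : ∀ p ∈ Finset.HasAntidiagonal.antidiagonal m, Bseq p.1 * Bseq p.2 = 0 := by
        intro p hp
        rw [Finset.HasAntidiagonal.mem_antidiagonal] at hp
        rcases Nat.eq_zero_or_pos p.1 with h1 | h1
        · rw [show p.1 = 0 from h1, ih 0 (by omega)]
          simp
        rcases Nat.eq_zero_or_pos p.2 with h2 | h2
        · rw [show p.2 = 0 from h2, ih 0 (by omega)]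
          simp
        rcases Nat.lt_or_ge p.1 2 with h3 | h3
        · have hp2 : p.2 = m - 1 := by omega
          rw [hp2, ih (m-1) (by omega), if_neg (by omega), mul_zero]
        · rw [ih p.1 (by omega), if_neg (by omega), zero_mul]
      rw [Finset.sum_congr rfl this]
      simp

/-! ### The key binomial identity -/

lemma choose_pascal {a b : ℕ} (ha : 1 ≤ a) (hb : 1 ≤ b) :
    a.choose b = (a-1).choose b + (a-1).choose (b-1) := by
  have h1 : a = (a-1) + 1 := by omega
  have h2 : b = (b-1) + 1 := by omega
  calc a.choose b = ((a-1)+1).choose ((b-1)+1) := by rw [← h1, ← h2]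
    _ = (a-1).choose (b-1) + (a-1).choose ((b-1)+1) := Nat.choose_succ_succ _ _
    _ = (a-1).choose b + (a-1).choose (b-1) := by rw [← h2, Nat.add_comm]

lemma keyId (n : ℕ) : ∀ m : ℕ, 1 ≤ m → m ≤ n →
    ∑ k ∈ Finset.range m, dseq (m - k) * ((n - k).choose k : ℤ)
      = -(((n - m).choose (m - 1) : ℤ)) := by
  induction n using Nat.strong_induction_on with
  | _ n ih =>
    intro m hm1 hmn
    rcases eq_or_lt_of_le hm1 with hm | hm2
    · rw [← hm]
      simp [dseq, catalan_zero]
    rcases eq_or_lt_of_le hmn with hnm | hnm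
    · -- n = m
      subst hnm
      have hL : ∑ k ∈ Finset.range m, dseq (m - k) * ((m - k).choose k : ℤ)
          = ∑ k ∈ Finset.range m, dseq (k+1) * ((k+1).choose (m-(k+1)) : ℤ) := by
        conv_rhs => rw [← Finset.sum_range_reflect]
        refine Finset.sum_congr rfl fun k hk => ?_
        rw [Finset.mem_range] at hk
        rw [show m - 1 - k + 1 = m - k from by omega, show m - (m - k) = k from by omega]
      have hR : Bseq m = ∑ k ∈ Finset.range m, dseq (k+1) * ((k+1).choose (m-(k+1)) : ℤ) := by
        rw [Bseq, Finset.sum_range_succ', dseq_zero]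
        simp
      rw [hL, ← hR, Bseq_eq, if_neg (by omega), Nat.sub_self,
        Nat.choose_eq_zero_of_lt (by omega : 0 < m - 1)]
      simp
    · -- n > m ≥ 2
      have hsplit : ∀ k ∈ Finset.range m, dseq (m - k) * ((n - k).choose k : ℤ)
          = dseq (m - k) * ((n - 1 - k).choose k : ℤ)
            + dseq (m - k) * (if k = 0 then 0 else ((n - 1 - k).choose (k-1) : ℤ)) := by
        intro k hk
        rw [Finset.mem_range] at hk
        rcases Nat.eq_zero_or_pos k with rfl | hk0
        · simp
        · rw [if_neg (by omega), ← mul_add]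
          congr 1
          have := choose_pascal (a := n - k) (b := k) (by omega) hk0
          rw [show n - k - 1 = n - 1 - k from by omega] at this
          rw [this]
          push_cast
          ring
      rw [Finset.sum_congr rfl hsplit, Finset.sum_add_distrib]
      have hA := ih (n-1) (by omega) m hm1 (by omega)
      have hB : ∑ k ∈ Finset.range m, dseq (m - k) *
            (if k = 0 then 0 else ((n - 1 - k).choose (k-1) : ℤ))
          = -(((n - 1 - m).choose (m - 2) : ℤ)) := by
        obtain ⟨m', rfl⟩ : ∃ m', m = m' + 1 := ⟨m - 1, by omega⟩
        rw [Finset.sum_range_succ']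
        have h1 : ∀ k ∈ Finset.range m', dseq (m' + 1 - (k+1)) *
              (if k + 1 = 0 then 0 else ((n - 1 - (k+1)).choose (k+1-1) : ℤ))
            = dseq (m' - k) * ((n - 2 - k).choose k : ℤ) := by
          intro k hk
          rw [Finset.mem_range] at hk
          rw [if_neg (by omega), show m' + 1 - (k+1) = m' - k from by omega,
            show n - 1 - (k+1) = n - 2 - k from by omega, show k + 1 - 1 = k from rfl]
        rw [Finset.sum_congr rfl h1, if_pos rfl, mul_zero, add_zero]
        have h2 := ih (n-2) (by omega) m' (by omega) (by omega)
        rw [h2, show n - 1 - (m'+1) = n - 2 - m' from by omega,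
          show m' + 1 - 2 = m' - 1 from by omega]
      rw [hA, hB]
      have hp := choose_pascal (a := n - m) (b := m - 1) (by omega) (by omega)
      rw [show n - m - 1 = n - 1 - m from by omega, show m - 1 - 1 = m - 2 from by omega] at hp
      rw [hp]
      push_cast
      ring

/-! ### Compositions: recursion on the first block -/

def consComposition {m : ℕ} (x : Σ j : Fin (m+1), Composition (m - (j:ℕ))) :
    Composition (m+1) :=
  ⟨((x.1 : ℕ) + 1) :: x.2.blocks, by
    intro i hi
    rcases List.mem_cons.1 hi with h | h
    · omega
    · exact x.2.blocks_pos h, by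
    have := x.1.isLt
    rw [List.sum_cons, x.2.blocks_sum]
    omega⟩

lemma consComposition_bijective (m : ℕ) :
    Function.Bijective (consComposition (m := m)) := by
  constructor
  · rintro ⟨j, c⟩ ⟨j', c'⟩ h
    simp only [consComposition, Composition.mk.injEq, List.cons.injEq] at h
    obtain rfl : j = j' := Fin.ext (by omega)
    obtain rfl : c = c' := Composition.ext h.2
    rfl
  · intro c
    have hne : c.blocks ≠ [] := by
      intro h
      have := c.blocks_sum
      rw [h] at this
      simp at this
    rcases hb : c.blocks with _ | ⟨b, l⟩
    · exact absurd hb hne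
    have hbpos : 0 < b := c.blocks_pos (by rw [hb]; exact List.mem_cons_self)
    have hsum : b + l.sum = m + 1 := by
      have := c.blocks_sum
      rw [hb] at this
      simpa using this
    refine ⟨⟨⟨b - 1, by omega⟩, ⟨l,
      fun hi => c.blocks_pos (by rw [hb]; exact List.mem_cons_of_mem _ hi),
      by show l.sum = m - (b - 1); omega⟩⟩, ?_⟩
    apply Composition.ext
    show (b - 1 + 1) :: l = c.blocks
    rw [hb, show b - 1 + 1 = b from by omega]

lemma sum_composition_succ {M : Type*} [AddCommMonoid M] (m : ℕ) (f : List ℕ → M) :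
    ∑ c : Composition (m+1), f c.blocks
      = ∑ j ∈ Finset.range (m+1), ∑ c : Composition (m - j), f ((j+1) :: c.blocks) := by
  calc ∑ c : Composition (m+1), f c.blocks
      = ∑ x : (Σ j : Fin (m+1), Composition (m - (j:ℕ))), f (((x.1:ℕ)+1) :: x.2.blocks) :=
        (Fintype.sum_bijective _ (consComposition_bijective m) _ _ (fun x => rfl)).symm
    _ = ∑ j : Fin (m+1), ∑ c : Composition (m - (j:ℕ)), f (((j:ℕ)+1) :: c.blocks) := by
        rw [← Finset.univ_sigma_univ, Finset.sum_sigma]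
    _ = ∑ j ∈ Finset.range (m+1), ∑ c : Composition (m - j), f ((j+1) :: c.blocks) :=
        Fin.sum_univ_eq_sum_range (fun j => ∑ c : Composition (m - j), f ((j+1) :: c.blocks)) (m+1)

lemma composition_zero_blocks (c : Composition 0) : c.blocks = [] := by
  rcases hb : c.blocks with _ | ⟨b, l⟩
  · rfl
  · exfalso
    have hs := c.blocks_sum
    rw [hb] at hs
    have hbpos : 0 < b := c.blocks_pos (by rw [hb]; exact List.mem_cons_self)
    simp at hs
    omega

lemma sum_composition_zero {M : Type*} [AddCommMonoid M] (f : List ℕ → M) :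
    ∑ c : Composition 0, f c.blocks = f [] := by
  rw [Finset.sum_congr rfl fun c _ => by rw [composition_zero_blocks c]]
  rw [Finset.sum_const, Finset.card_univ, composition_card]
  norm_num

/-! ### The tail sums `Tn` -/

def Tn (n k : ℕ) : ℤ :=
  ∑ c : Composition k, (c.blocks.map fun i => -(((n-i).choose i : ℕ) : ℤ)).prod

lemma Tn_zero (n : ℕ) : Tn n 0 = 1 := by
  rw [Tn, sum_composition_zero (fun l => (l.map fun i => -(((n-i).choose i : ℕ) : ℤ)).prod)]
  simp

lemma Tn_succ (n m : ℕ) : Tn n (m+1)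
    = ∑ j ∈ Finset.range (m+1), (-(((n-(j+1)).choose (j+1) : ℕ) : ℤ)) * Tn n (m - j) := by
  rw [Tn, sum_composition_succ m (fun l => (l.map fun i => -(((n-i).choose i : ℕ) : ℤ)).prod)]
  refine Finset.sum_congr rfl fun j hj => ?_
  rw [Tn, Finset.mul_sum]
  refine Finset.sum_congr rfl fun c hc => ?_
  rw [List.map_cons, List.prod_cons]

lemma conv_aT (n m : ℕ) (hm : 1 ≤ m) :
    ∑ k ∈ Finset.range (m+1), ((n-k).choose k : ℤ) * Tn n (m-k) = 0 := by
  obtain ⟨m', rfl⟩ : ∃ m', m = m' + 1 := ⟨m - 1, by omega⟩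
  rw [Finset.sum_range_succ']
  have h1 : ∀ k ∈ Finset.range (m'+1), ((n-(k+1)).choose (k+1) : ℤ) * Tn n (m'+1-(k+1))
      = ((n-(k+1)).choose (k+1) : ℤ) * Tn n (m'-k) := by
    intro k hk
    rw [Nat.succ_sub_succ]
  rw [Finset.sum_congr rfl h1, Nat.sub_zero, Nat.choose_zero_right, Nat.sub_zero,
    Nat.cast_one, one_mul, Tn_succ, ← Finset.sum_add_distrib]
  refine Finset.sum_eq_zero fun k hk => ?_
  ring

/-! ### Identification of the composition sum -/

/-- The weight of a composition `l = (m₁, …, m_t)` of `m`: `(-1)^t` times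
`C(n - m₁, m₁ - 1)` for the first part and `C(n - mᵢ, mᵢ)` for the rest. -/
def compWeight (n : ℕ) (l : List ℕ) : ℤ :=
  (-1) ^ l.length * ((n - l.headI).choose (l.headI - 1) : ℤ) *
    (l.tail.map fun mi => ((n - mi).choose mi : ℤ)).prod

lemma map_neg_prod (g : ℕ → ℤ) (l : List ℕ) :
    (l.map fun i => -(g i)).prod = (-1)^l.length * (l.map g).prod := by
  induction l with
  | nil => simp
  | cons a t ih =>
    simp only [List.map_cons, List.prod_cons, List.length_cons, ih]
    ring

lemma compWeight_cons (n j : ℕ) (bl : List ℕ) :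
    compWeight n ((j+1) :: bl)
      = (-(((n-(j+1)).choose j : ℕ) : ℤ)) *
        (bl.map fun i => -(((n-i).choose i : ℕ) : ℤ)).prod := by
  rw [compWeight]
  simp only [List.headI_cons, List.tail_cons, List.length_cons, Nat.add_sub_cancel]
  rw [map_neg_prod (fun i => (((n-i).choose i : ℕ) : ℤ))]
  ring

lemma S_eq (n m : ℕ) :
    ∑ c : Composition (m+1), compWeight n c.blocks
      = ∑ j ∈ Finset.range (m+1), (-(((n-(j+1)).choose j : ℕ) : ℤ)) * Tn n (m - j) := by
  rw [sum_composition_succ m (compWeight n)]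
  refine Finset.sum_congr rfl fun j hj => ?_
  rw [Tn, Finset.mul_sum]
  exact Finset.sum_congr rfl fun c hc => compWeight_cons n j c.blocks

/-! ### Putting it together via polynomial coefficients -/

lemma coeff_Pd_Pa (n i : ℕ) (hi1 : 1 ≤ i) (hin : i ≤ n) :
    ((polyOf dseq n) * (polyOf (fun j => (((n-j).choose j : ℕ) : ℤ)) n)).coeff i
      = -(((n-i).choose (i-1) : ℤ)) := by
  rw [mul_comm, coeff_mul, Finset.Nat.sum_antidiagonal_eq_sum_range_succ_mk]
  have h1 : ∀ k ∈ Finset.range (i+1),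
      (polyOf (fun j => (((n-j).choose j : ℕ) : ℤ)) n).coeff k * (polyOf dseq n).coeff (i-k)
        = dseq (i-k) * (((n-k).choose k : ℕ) : ℤ) := by
    intro k hk
    rw [Finset.mem_range] at hk
    rw [coeff_polyOf, coeff_polyOf, if_pos (by omega), if_pos (by omega), mul_comm]
  rw [Finset.sum_congr rfl h1, Finset.sum_range_succ, Nat.sub_self, dseq_zero, zero_mul,
    add_zero]
  exact keyId n i hi1 hin

lemma coeff_Pa_Pt (n j : ℕ) (hj : j ≤ n) :
    ((polyOf (fun k => (((n-k).choose k : ℕ) : ℤ)) n) * (polyOf (Tn n) n)).coeff j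
      = if j = 0 then 1 else 0 := by
  rw [coeff_mul, Finset.Nat.sum_antidiagonal_eq_sum_range_succ_mk]
  have h1 : ∀ k ∈ Finset.range (j+1),
      (polyOf (fun k => (((n-k).choose k : ℕ) : ℤ)) n).coeff k * (polyOf (Tn n) n).coeff (j-k)
        = (((n-k).choose k : ℕ) : ℤ) * Tn n (j-k) := by
    intro k hk
    rw [Finset.mem_range] at hk
    rw [coeff_polyOf, coeff_polyOf, if_pos (by omega), if_pos (by omega)]
  rw [Finset.sum_congr rfl h1]
  rcases Nat.eq_zero_or_pos j with rfl | hj0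
  · rw [if_pos rfl]
    simp [Tn_zero]
  · rw [if_neg (by omega)]
    exact conv_aT n j hj0

lemma S_val (n m : ℕ) (hm : 1 ≤ m) (hmn : m ≤ n) :
    ∑ c : Composition m, compWeight n c.blocks = dseq m := by
  set Pd := polyOf dseq n
  set Pa := polyOf (fun k => (((n-k).choose k : ℕ) : ℤ)) n
  set Pt := polyOf (Tn n) n
  have e2 : (Pd * (Pa * Pt)).coeff m = dseq m := by
    rw [coeff_mul, Finset.Nat.sum_antidiagonal_eq_sum_range_succ_mk, Finset.sum_range_succ]
    have h1 : ∀ k ∈ Finset.range m, Pd.coeff k * (Pa * Pt).coeff (m-k) = 0 := by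
      intro k hk
      rw [Finset.mem_range] at hk
      rw [coeff_Pa_Pt n (m-k) (by omega), if_neg (by omega), mul_zero]
    rw [Finset.sum_congr rfl h1, Finset.sum_const, Nat.sub_self,
      coeff_Pa_Pt n 0 (by omega), if_pos rfl, mul_one, coeff_polyOf, if_pos (by omega)]
    simp
  have e1 : ((Pd * Pa) * Pt).coeff m = ∑ c : Composition m, compWeight n c.blocks := by
    obtain ⟨m', rfl⟩ : ∃ m', m = m' + 1 := ⟨m - 1, by omega⟩
    rw [coeff_mul, Finset.Nat.sum_antidiagonal_eq_sum_range_succ_mk, Finset.sum_range_succ',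
      S_eq n m']
    have h0 : (Pd * Pa).coeff 0 * Pt.coeff (m'+1-0) = 0 := by
      rw [coeff_mul, Finset.Nat.antidiagonal_zero]
      simp only [Finset.sum_singleton]
      rw [coeff_polyOf, if_pos (by omega), dseq_zero, zero_mul, zero_mul]
    rw [h0, add_zero]
    refine Finset.sum_congr rfl fun k hk => ?_
    rw [Finset.mem_range] at hk
    rw [coeff_Pd_Pa n (k+1) (by omega) (by omega), coeff_polyOf, if_pos (by omega)]
    simp [Nat.succ_sub_succ]
  rw [← e1, mul_assoc, e2]

/-! ### Main theorem -/

theorem weighted_compositions_independent_of_n :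
    (∀ m n n' : ℕ, 1 ≤ m → m ≤ n → m ≤ n' →
      ∑ c : Composition m, compWeight n c.blocks =
        ∑ c : Composition m, compWeight n' c.blocks) ∧
    (∀ n : ℕ, 1 ≤ n →
      ∑ c : Composition n, compWeight n c.blocks = (-1) ^ n * catalan (n - 1)) := by
  constructor
  · intro m n n' hm hmn hmn'
    rw [S_val n m hm hmn, S_val n' m hm hmn']
  · intro n hn
    rw [S_val n n hn le_rfl, dseq, if_neg (by omega)]
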